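/- arXiv:2508.06048 — 13 statements merged into one kernel-verified Lean document; each statement's English description precedes it below -/
import Mathlib

section
/- Let a_bi, a_iw, a_bw be positive reals with a_bi * a_iw > a_bw, and let a = min(a_bi, a_iw). Then the equation (a_bi - x)(a_iw - x) = a_bw + x has a root c with 0 < c < a. -/
theorem stmt_1 (a_bi a_iw a_bw : ℝ)
    (hbi : 0 < a_bi) (hiw : 0 < a_iw) (hbw : 0 < a_bw)
    (h : a_bi * a_iw > a_bw) :
    ∃ c : ℝ, 0 < c ∧ c < min a_bi a_iw ∧ (a_bi - c) * (a_iw - c) = a_bw + c := by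
  set a := min a_bi a_iw with ha
  have ha0 : 0 < a := lt_min hbi hiw
  set F : ℝ → ℝ := fun x => (a_bi - x) * (a_iw - x) - (a_bw + x) with hF
  have hcont : ContinuousOn F (Set.Icc 0 a) := by
    apply Continuous.continuousOn; fun_prop
  have hF0 : F 0 > 0 := by simp [hF]; linarith
  have hFa : F a < 0 := by
    have : (a_bi - a) * (a_iw - a) = 0 := by
      rcases min_choice a_bi a_iw with hc | hc <;> rw [ha, hc] <;> ring
    simp only [hF]; rw [this]; linarith
  have := intermediate_value_Ioo' (le_of_lt ha0) hcont
  have h0 : (0:ℝ) ∈ Set.Ioo (F a) (F 0) := ⟨hFa, hF0⟩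
  obtain ⟨c, hc, hFc⟩ := this h0
  exact ⟨c, hc.1, hc.2, by simp only [hF] at hFc; linarith⟩
end

section
/- Let a_bi, a_iw, a_bj, a_jw be positive reals with a_bi * a_iw < a_bj * a_jw, and set ε = (a_bj * a_jw - a_bi * a_iw)/(a_bi + a_iw + a_bj + a_jw). Then (a_bi + ε)(a_iw + ε) = (a_bj - ε)(a_jw - ε), and moreover ε < a_bj and ε < a_jw. -/
theorem stmt_3 (a_bi a_iw a_bj a_jw : ℝ)
    (hbi : 0 < a_bi) (hiw : 0 < a_iw) (hbj : 0 < a_bj) (hjw : 0 < a_jw)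
    (h : a_bi * a_iw < a_bj * a_jw) :
    let ε := (a_bj * a_jw - a_bi * a_iw) / (a_bi + a_iw + a_bj + a_jw)
    (a_bi + ε) * (a_iw + ε) = (a_bj - ε) * (a_jw - ε) ∧ ε < a_bj ∧ ε < a_jw := by
  intro ε
  have hS : 0 < a_bi + a_iw + a_bj + a_jw := by linarith
  have hε : ε * (a_bi + a_iw + a_bj + a_jw) = a_bj * a_jw - a_bi * a_iw := by
    exact div_mul_cancel₀ _ hS.ne'
  refine ⟨by nlinarith [hε], ?_, ?_⟩
  · have : ε = (a_bj * a_jw - a_bi * a_iw) / (a_bi + a_iw + a_bj + a_jw) := rfl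
    rw [this, div_lt_iff₀ hS]; nlinarith
  · have : ε = (a_bj * a_jw - a_bi * a_iw) / (a_bi + a_iw + a_bj + a_jw) := rfl
    rw [this, div_lt_iff₀ hS]; nlinarith
end

section
/- Suppose positive reals ã_bi, ã_iw, ã_bw satisfy ã_bi * ã_iw = ã_bw, and let η_bi = |ã_bi - a_bi|, η_iw = |ã_iw - a_iw|, η_bw = |ã_bw - a_bw| where a_bi * a_iw < a_bw. Let ε be the smallest positive root of (a_bi + x)(a_iw + x) = a_bw - x. Then at least one of η_bi ≥ ε, η_iw ≥ ε, η_bw ≥ ε holds. -/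
theorem stmt_4 (a_bi a_iw a_bw : ℝ)
    (hbi : 0 < a_bi) (hiw : 0 < a_iw) (hbw : 0 < a_bw)
    (h : a_bi * a_iw < a_bw)
    (ta_bi ta_iw ta_bw : ℝ)
    (htbi : 0 < ta_bi) (htiw : 0 < ta_iw) (htbw : 0 < ta_bw)
    (hcons : ta_bi * ta_iw = ta_bw)
    (ε : ℝ) (hε : 0 < ε)
    (hroot : (a_bi + ε) * (a_iw + ε) = a_bw - ε)
    (hsmall : ∀ x : ℝ, 0 < x → (a_bi + x) * (a_iw + x) = a_bw - x → ε ≤ x) :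
    ε ≤ |ta_bi - a_bi| ∨ ε ≤ |ta_iw - a_iw| ∨ ε ≤ |ta_bw - a_bw| := by
  by_contra hc
  push_neg at hc
  obtain ⟨h1, h2, h3⟩ := hc
  rw [abs_lt] at h1 h2 h3
  have key : ta_bi * ta_iw < (a_bi + ε) * (a_iw + ε) :=
    mul_lt_mul'' (by linarith) (by linarith) htbi.le htiw.le
  linarith
end

section
/- Suppose positive reals ã_bi, ã_iw, ã_bj, ã_jw satisfy ã_bi * ã_iw = ã_bj * ã_jw, where a_bi * a_iw < a_bj * a_jw, and let ε = (a_bj a_jw - a_bi a_iw)/(a_bi + a_iw + a_bj + a_jw). Then max(|ã_bi - a_bi|, |ã_iw - a_iw|, |ã_bj - a_bj|, |ã_jw - a_jw|) ≥ ε. -/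
theorem stmt_5 (a_bi a_iw a_bj a_jw : ℝ)
    (hbi : 0 < a_bi) (hiw : 0 < a_iw) (hbj : 0 < a_bj) (hjw : 0 < a_jw)
    (h : a_bi * a_iw < a_bj * a_jw)
    (ta_bi ta_iw ta_bj ta_jw : ℝ)
    (htbi : 0 < ta_bi) (htiw : 0 < ta_iw) (htbj : 0 < ta_bj) (htjw : 0 < ta_jw)
    (hcons : ta_bi * ta_iw = ta_bj * ta_jw) :
    let ε := (a_bj * a_jw - a_bi * a_iw) / (a_bi + a_iw + a_bj + a_jw)
    ε ≤ max (max |ta_bi - a_bi| |ta_iw - a_iw|) (max |ta_bj - a_bj| |ta_jw - a_jw|) := by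
  intro ε
  by_contra hlt
  push_neg at hlt
  have hS : 0 < a_bi + a_iw + a_bj + a_jw := by linarith
  have hεS : ε * (a_bi + a_iw + a_bj + a_jw) = a_bj * a_jw - a_bi * a_iw := by
    exact div_mul_cancel₀ _ hS.ne'
  have hε : 0 < ε := div_pos (by linarith) hS
  have h1 : |ta_bi - a_bi| < ε :=
    lt_of_le_of_lt (le_trans (le_max_left _ _) (le_max_left _ _)) hlt
  have h2 : |ta_iw - a_iw| < ε :=
    lt_of_le_of_lt (le_trans (le_max_right _ _) (le_max_left _ _)) hlt
  have h3 : |ta_bj - a_bj| < ε :=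
    lt_of_le_of_lt (le_trans (le_max_left _ _) (le_max_right _ _)) hlt
  have h4 : |ta_jw - a_jw| < ε :=
    lt_of_le_of_lt (le_trans (le_max_right _ _) (le_max_right _ _)) hlt
  rw [abs_lt] at h1 h2 h3 h4
  have hεbj : ε < a_bj := by nlinarith
  have hεjw : ε < a_jw := by nlinarith
  have k1 : ta_bi * ta_iw < (a_bi + ε) * (a_iw + ε) := by nlinarith [h1.2, h2.2]
  have k2 : (a_bj - ε) * (a_jw - ε) < ta_bj * ta_jw := by nlinarith [h3.1, h4.1]
  nlinarith [k1, k2, hεS]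
end

section
/- Let a_bi ≤ a_bj and a_iw ≤ a_jw be positive reals, with a_bi * a_iw < a_bw and a_bj * a_jw < a_bw for a positive real a_bw. Let ε_i, ε_j be the smallest positive roots of (a_bi + x)(a_iw + x) = a_bw - x and (a_bj + x)(a_jw + x) = a_bw - x respectively. Then ε_j ≤ ε_i. -/
theorem stmt_8 (a_bi a_iw a_bj a_jw a_bw : ℝ)
    (hbi : 0 < a_bi) (hiw : 0 < a_iw) (hbj : 0 < a_bj) (hjw : 0 < a_jw)
    (hbw : 0 < a_bw)
    (hij : a_bi ≤ a_bj) (hiw' : a_iw ≤ a_jw)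
    (hi : a_bi * a_iw < a_bw) (hj : a_bj * a_jw < a_bw)
    (εi εj : ℝ) (hεi : 0 < εi) (hεj : 0 < εj)
    (hrooti : (a_bi + εi) * (a_iw + εi) = a_bw - εi)
    (hrootj : (a_bj + εj) * (a_jw + εj) = a_bw - εj)
    (hsmalli : ∀ x : ℝ, 0 < x → (a_bi + x) * (a_iw + x) = a_bw - x → εi ≤ x)
    (hsmallj : ∀ x : ℝ, 0 < x → (a_bj + x) * (a_jw + x) = a_bw - x → εj ≤ x) :
    εj ≤ εi := by
  set f : ℝ → ℝ := fun x => (a_bj + x) * (a_jw + x) - (a_bw - x) with hf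
  have hcont : ContinuousOn f (Set.Icc 0 εi) := by fun_prop
  have hf0 : f 0 < 0 := by simp [hf]; linarith
  have hfε : 0 ≤ f εi := by
    have h1 : (a_bi + εi) * (a_iw + εi) ≤ (a_bj + εi) * (a_jw + εi) := by nlinarith
    simp only [hf]; linarith
  have := intermediate_value_Icc (le_of_lt hεi) hcont
  obtain ⟨x, hx, hfx⟩ := this ⟨le_of_lt hf0, hfε⟩
  have hxpos : 0 < x := by
    rcases lt_or_eq_of_le hx.1 with h | h
    · exact h
    · exfalso; rw [← h] at hfx; linarith
  have : εj ≤ x := hsmallj x hxpos (by simpa [hf, sub_eq_zero] using hfx)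
  linarith [hx.2]
end

section
/- Let a_bi ≤ a_bj and a_iw ≤ a_jw be positive reals, with a_bi * a_iw > a_bw and a_bj * a_jw > a_bw for a positive real a_bw. Let ε_i, ε_j be the smallest positive roots of (a_bi - x)(a_iw - x) = a_bw + x and (a_bj - x)(a_jw - x) = a_bw + x respectively. Then ε_i ≤ ε_j. -/
lemma root_exists_aux (p q r a b : ℝ) (hab : a ≤ b)
    (ha : 0 ≤ (p - a) * (q - a) - (r + a))
    (hb : (p - b) * (q - b) - (r + b) ≤ 0) :
    ∃ x ∈ Set.Icc a b, (p - x) * (q - x) = r + x := by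
  have hc : ContinuousOn (fun x : ℝ => (p - x) * (q - x) - (r + x)) (Set.Icc a b) :=
    (Continuous.continuousOn (by continuity))
  have h := intermediate_value_Icc' hab hc
  have h0 : (0:ℝ) ∈ Set.Icc ((p - b) * (q - b) - (r + b)) ((p - a) * (q - a) - (r + a)) :=
    ⟨hb, ha⟩
  obtain ⟨x, hx, hfx⟩ := h h0
  exact ⟨x, hx, by simp only at hfx; linarith⟩

theorem stmt_9 (a_bi a_iw a_bj a_jw a_bw : ℝ)
    (hbi : 0 < a_bi) (hiw : 0 < a_iw) (hbj : 0 < a_bj) (hjw : 0 < a_jw)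
    (hbw : 0 < a_bw)
    (hij : a_bi ≤ a_bj) (hiw' : a_iw ≤ a_jw)
    (hi : a_bi * a_iw > a_bw) (hj : a_bj * a_jw > a_bw)
    (εi εj : ℝ) (hεi : 0 < εi) (hεj : 0 < εj)
    (hrooti : (a_bi - εi) * (a_iw - εi) = a_bw + εi)
    (hrootj : (a_bj - εj) * (a_jw - εj) = a_bw + εj)
    (hsmalli : ∀ x : ℝ, 0 < x → (a_bi - x) * (a_iw - x) = a_bw + x → εi ≤ x)
    (hsmallj : ∀ x : ℝ, 0 < x → (a_bj - x) * (a_jw - x) = a_bw + x → εj ≤ x) :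
    εi ≤ εj := by
  set m := min a_bi a_iw with hm
  have hmpos : 0 < m := lt_min hbi hiw
  -- εi < m : smallest positive root of the i-equation lies below min a_bi a_iw
  have hεim : εi < m := by
    have hfm : (a_bi - m) * (a_iw - m) - (a_bw + m) ≤ 0 := by
      rcases min_cases a_bi a_iw with ⟨h1, h2⟩ | ⟨h1, h2⟩ <;> rw [hm, h1] <;> nlinarith
    have hf0 : 0 ≤ (a_bi - 0) * (a_iw - 0) - (a_bw + 0) := by nlinarith
    obtain ⟨x, ⟨hx0, hxm⟩, hxroot⟩ :=
      root_exists_aux a_bi a_iw a_bw 0 m hmpos.le hf0 hfm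
    have hxpos : 0 < x := by
      rcases lt_or_eq_of_le hx0 with h | h
      · exact h
      · exfalso; rw [← h] at hxroot; nlinarith
    have hxm' : x < m := by
      rcases lt_or_eq_of_le hxm with h | h
      · exact h
      · exfalso; rw [h] at hxroot
        rcases min_cases a_bi a_iw with ⟨h1, h2⟩ | ⟨h1, h2⟩ <;> rw [hm, h1] at hxroot <;>
          nlinarith
    exact lt_of_le_of_lt (hsmalli x hxpos hxroot) hxm'
  -- Case split: if εj ≥ m we're done since εi < m
  rcases le_or_gt m εj with h | h
  · exact (hεim.trans_le h).le
  · -- εj < m ≤ a_bi, a_iw : both i-factors positive at εj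
    have hb1 : εj < a_bi := lt_of_lt_of_le h (min_le_left _ _)
    have hb2 : εj < a_iw := lt_of_lt_of_le h (min_le_right _ _)
    have hfεj : (a_bi - εj) * (a_iw - εj) - (a_bw + εj) ≤ 0 := by nlinarith
    have hf0 : 0 ≤ (a_bi - 0) * (a_iw - 0) - (a_bw + 0) := by nlinarith
    obtain ⟨x, ⟨hx0, hxe⟩, hxroot⟩ :=
      root_exists_aux a_bi a_iw a_bw 0 εj hεj.le hf0 hfεj
    have hxpos : 0 < x := by
      rcases lt_or_eq_of_le hx0 with h' | h'
      · exact h'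
      · exfalso; rw [← h'] at hxroot; nlinarith
    exact (hsmalli x hxpos hxroot).trans hxe
end

section
/- Let a_bi ≤ a_bj ≤ a_bk and a_iw ≤ a_jw ≤ a_kw be positive reals. Define ε_{p,q} = |a_bp * a_pw - a_bq * a_qw| / (a_bp + a_pw + a_bq + a_qw) for indices p, q ∈ {i, j, k}. Then ε_{i,j} ≤ ε_{i,k} and ε_{j,k} ≤ ε_{i,k}. -/
theorem stmt_10 (a_bi a_iw a_bj a_jw a_bk a_kw : ℝ)
    (hbi : 0 < a_bi) (hiw : 0 < a_iw) (hbj : 0 < a_bj) (hjw : 0 < a_jw)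
    (hbk : 0 < a_bk) (hkw : 0 < a_kw)
    (h1 : a_bi ≤ a_bj) (h2 : a_bj ≤ a_bk)
    (h3 : a_iw ≤ a_jw) (h4 : a_jw ≤ a_kw) :
    let εij := |a_bi * a_iw - a_bj * a_jw| / (a_bi + a_iw + a_bj + a_jw)
    let εik := |a_bi * a_iw - a_bk * a_kw| / (a_bi + a_iw + a_bk + a_kw)
    let εjk := |a_bj * a_jw - a_bk * a_kw| / (a_bj + a_jw + a_bk + a_kw)
    εij ≤ εik ∧ εjk ≤ εik := by
  intro εij εik εjk
  have pij : a_bi * a_iw ≤ a_bj * a_jw :=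
    mul_le_mul h1 h3 hiw.le hbj.le
  have pik : a_bi * a_iw ≤ a_bk * a_kw :=
    mul_le_mul (h1.trans h2) (h3.trans h4) hiw.le hbk.le
  have pjk : a_bj * a_jw ≤ a_bk * a_kw :=
    mul_le_mul h2 h4 hjw.le hbk.le
  have eij : εij = (a_bj * a_jw - a_bi * a_iw) / (a_bi + a_iw + a_bj + a_jw) := by
    show |a_bi * a_iw - a_bj * a_jw| / _ = _
    rw [abs_sub_comm, abs_of_nonneg (by linarith)]
  have eik : εik = (a_bk * a_kw - a_bi * a_iw) / (a_bi + a_iw + a_bk + a_kw) := by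
    show |a_bi * a_iw - a_bk * a_kw| / _ = _
    rw [abs_sub_comm, abs_of_nonneg (by linarith)]
  have ejk : εjk = (a_bk * a_kw - a_bj * a_jw) / (a_bj + a_jw + a_bk + a_kw) := by
    show |a_bj * a_jw - a_bk * a_kw| / _ = _
    rw [abs_sub_comm, abs_of_nonneg (by linarith)]
  have dij : (0:ℝ) < a_bi + a_iw + a_bj + a_jw := by linarith
  have dik : (0:ℝ) < a_bi + a_iw + a_bk + a_kw := by linarith
  have djk : (0:ℝ) < a_bj + a_jw + a_bk + a_kw := by linarith
  constructor
  · rw [eij, eik, div_le_div_iff₀ dij dik]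
    nlinarith [mul_nonneg (mul_nonneg (sub_nonneg.2 h2) (by linarith : (0:ℝ) ≤ a_jw + a_bi)) (by linarith : (0:ℝ) ≤ a_jw + a_iw),
      mul_nonneg (mul_nonneg (sub_nonneg.2 h4) (by linarith : (0:ℝ) ≤ a_bk + a_bi)) (by linarith : (0:ℝ) ≤ a_bk + a_iw)]
  · rw [ejk, eik, div_le_div_iff₀ djk dik]
    nlinarith [mul_nonneg (sub_nonneg.2 pjk) (by linarith : (0:ℝ) ≤ a_bj + a_jw - a_bi - a_iw),
      mul_nonneg (sub_nonneg.2 (sub_le_sub_left pij (a_bk * a_kw))) dik.le]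
end

section
/- For any positive reals p, q with p ≤ r and q ≤ r, where r ≥ 1 and p*q > r, the smallest positive root ε of (p - x)(q - x) = r + x satisfies ε ≤ (2r + 1 - sqrt(8r + 1))/2. -/
theorem stmt_12 (p q r : ℝ)
    (hp : 0 < p) (hq : 0 < q) (hr : 1 ≤ r)
    (hpr : p ≤ r) (hqr : q ≤ r)
    (h : p * q > r)
    (ε : ℝ) (hε : 0 < ε)
    (hroot : (p - ε) * (q - ε) = r + ε)
    (hsmall : ∀ x : ℝ, 0 < x → (p - x) * (q - x) = r + x → ε ≤ x) :
    ε ≤ (2 * r + 1 - Real.sqrt (8 * r + 1)) / 2 := by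
  set s := Real.sqrt (8 * r + 1) with hs
  have hs0 : 0 ≤ s := Real.sqrt_nonneg _
  have hs2 : s ^ 2 = 8 * r + 1 := Real.sq_sqrt (by linarith)
  have hs1 : 1 ≤ s := by nlinarith
  set e := (2 * r + 1 - s) / 2 with he
  have her : e ≤ r := by simp only [he]; linarith
  have hkey : (r - e) ^ 2 = r + e := by
    simp only [he]; nlinarith [hs2]
  have hr1 : 1 < r := by
    rcases lt_or_eq_of_le hr with h1 | h1
    · exact h1
    · exfalso
      have hpq : p * q ≤ r * r := mul_le_mul hpr hqr hq.le (by linarith)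
      nlinarith
  have he0 : 0 < e := by
    have : s ^ 2 < (2 * r + 1) ^ 2 := by nlinarith
    have : s < 2 * r + 1 := by nlinarith
    simp only [he]; linarith
  set c := min (min p q) e with hc
  have hc0 : 0 < c := lt_min (lt_min hp hq) he0
  have hcE : c ≤ e := min_le_right _ _
  set f : ℝ → ℝ := fun x => (p - x) * (q - x) - (r + x) with hf
  have hf0 : 0 < f 0 := by simp [hf]; linarith
  have hfc : f c ≤ 0 := by
    rcases le_or_gt e (min p q) with h1 | h1
    · have hce : c = e := min_eq_right h1
      have hpe : e ≤ p := le_trans h1 (min_le_left _ _)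
      have hqe : e ≤ q := le_trans h1 (min_le_right _ _)
      have h2 : (p - e) * (q - e) ≤ (r - e) * (r - e) :=
        mul_le_mul (by linarith) (by linarith) (by linarith) (by linarith)
      simp only [hf, hce]
      nlinarith
    · have hce : c = min p q := min_eq_left h1.le
      rcases le_total p q with h2 | h2
      · have : c = p := by rw [hce, min_eq_left h2]
        simp [hf, this]; nlinarith
      · have : c = q := by rw [hce, min_eq_right h2]
        simp [hf, this]; nlinarith
  have hcont : ContinuousOn f (Set.Icc 0 c) := by
    apply Continuous.continuousOn; fun_prop
  have hiv := intermediate_value_Icc' hc0.le hcont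
  have h0mem : (0 : ℝ) ∈ Set.Icc (f c) (f 0) := ⟨hfc, hf0.le⟩
  obtain ⟨x, hx, hfx⟩ := hiv h0mem
  have hx0 : 0 < x := by
    rcases lt_or_eq_of_le hx.1 with h1 | h1
    · exact h1
    · exfalso; rw [← h1] at hfx; linarith
  have hεx := hsmall x hx0 (by simp only [hf] at hfx; linarith)
  linarith [hx.2]
end

section
/- For positive reals a_bi, a_iw, a_bj, a_jw all lying in the interval [1, r] for some r ≥ 1, the quantity |a_bi * a_iw - a_bj * a_jw| / (a_bi + a_iw + a_bj + a_jw) is at most (r^2 - 1)/(2r + 2). -/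
theorem stmt_13 (a_bi a_iw a_bj a_jw r : ℝ)
    (hr : 1 ≤ r)
    (h1 : a_bi ∈ Set.Icc 1 r) (h2 : a_iw ∈ Set.Icc 1 r)
    (h3 : a_bj ∈ Set.Icc 1 r) (h4 : a_jw ∈ Set.Icc 1 r) :
    |a_bi * a_iw - a_bj * a_jw| / (a_bi + a_iw + a_bj + a_jw) ≤
      (r ^ 2 - 1) / (2 * r + 2) := by
  obtain ⟨h1a, h1b⟩ := h1
  obtain ⟨h2a, h2b⟩ := h2
  obtain ⟨h3a, h3b⟩ := h3
  obtain ⟨h4a, h4b⟩ := h4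
  have hS : (0:ℝ) < a_bi + a_iw + a_bj + a_jw := by linarith
  have hD : (0:ℝ) < 2 * r + 2 := by linarith
  rw [div_le_div_iff₀ hS hD]
  rcases abs_cases (a_bi * a_iw - a_bj * a_jw) with ⟨h, _⟩ | ⟨h, _⟩ <;> rw [h] <;>
    nlinarith [mul_nonneg (sub_nonneg.2 h1a) (sub_nonneg.2 (h2b.trans_eq rfl)),
      mul_nonpos_of_nonneg_of_nonpos (sub_nonneg.2 h1a) (by linarith : a_iw - r ≤ 0),
      mul_nonpos_of_nonneg_of_nonpos (sub_nonneg.2 h2a) (by linarith : a_bi - r ≤ 0),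
      mul_nonpos_of_nonneg_of_nonpos (sub_nonneg.2 h3a) (by linarith : a_jw - r ≤ 0),
      mul_nonpos_of_nonneg_of_nonpos (sub_nonneg.2 h4a) (by linarith : a_bj - r ≤ 0),
      mul_le_mul h1b h2b (by linarith) (by linarith),
      mul_le_mul h3b h4b (by linarith) (by linarith),
      one_le_mul_of_one_le_of_one_le h1a h2a,
      one_le_mul_of_one_le_of_one_le h3a h4a]
end

section
/- Let n ≥ 2 and let (A_b, A_w) be a pairwise comparison system with positive entries, with best index b and worst index w. The system w_b/w_i = a_bi, w_i/w_w = a_iw for all i ≠ b,w, w_b/w_w = a_bw, together with w_1 + ... + w_n = 1 and all w_i > 0, has a solution if and only if a_bi * a_iw = a_bw for all i ∉ {b, w}. -/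
theorem stmt_16 (n : ℕ) (hn : 2 ≤ n)
    (b w : Fin n) (hbw : b ≠ w)
    (ab aw : Fin n → ℝ)
    (hab : ∀ i, 0 < ab i) (haw : ∀ i, 0 < aw i)
    (habb : ab b = 1) (haww : aw w = 1)
    (habw : ab w = aw b) :
    (∃ wt : Fin n → ℝ,
      (∀ i, 0 < wt i) ∧
      (∑ i, wt i) = 1 ∧
      (∀ i, i ≠ b → i ≠ w → wt b / wt i = ab i ∧ wt i / wt w = aw i) ∧
      wt b / wt w = ab w) ↔
    (∀ i, i ≠ b → i ≠ w → ab i * aw i = ab w) := by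
  constructor
  · rintro ⟨wt, hpos, _, hsys, hbwd⟩ i hib hiw
    obtain ⟨h1, h2⟩ := hsys i hib hiw
    rw [← h1, ← h2, ← hbwd, div_mul_div_cancel₀ (hpos i).ne']
  · intro hcons
    set v : Fin n → ℝ := fun i => if i = b then ab w else if i = w then 1 else aw i with hv
    have hvpos : ∀ i, 0 < v i := by
      intro i
      simp only [hv]
      split_ifs
      · exact hab w
      · norm_num
      · exact haw i
    have hS : 0 < ∑ i, v i := Finset.sum_pos (fun i _ => hvpos i) ⟨b, Finset.mem_univ b⟩
    have hvb : v b = ab w := by simp [hv]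
    have hvw : v w = 1 := by simp [hv, hbw.symm]
    have key : ∀ x y : Fin n, (v x / ∑ j, v j) / (v y / ∑ j, v j) = v x / v y := by
      intro x y
      rw [div_div_div_cancel_right₀ hS.ne']
    refine ⟨fun i => v i / (∑ j, v j), fun i => div_pos (hvpos i) hS, ?_, ?_, ?_⟩
    · rw [← Finset.sum_div, div_self hS.ne']
    · intro i hib hiw
      have hvi : v i = aw i := by simp [hv, hib, hiw]
      constructor
      · rw [key, hvb, hvi, ← hcons i hib hiw,
          mul_div_assoc, div_self (haw i).ne', mul_one]
      · rw [key, hvi, hvw, div_one]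
    · rw [key, hvb, hvw, div_one]
end

section
/- Under the hypotheses of the previous statement, if a solution exists it is unique and given by w_i = a_iw / (Σ_{j=1}^n a_jw) = 1 / (a_bi * Σ_{j=1}^n (1/a_bj)) for all i. -/
theorem stmt_17 (n : ℕ) (hn : 2 ≤ n)
    (b w : Fin n) (hbw : b ≠ w)
    (ab aw : Fin n → ℝ)
    (hab : ∀ i, 0 < ab i) (haw : ∀ i, 0 < aw i)
    (habb : ab b = 1) (haww : aw w = 1)
    (habw : ab w = aw b)
    (hcons : ∀ i, i ≠ b → i ≠ w → ab i * aw i = ab w)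
    (wt : Fin n → ℝ)
    (hwt : ∀ i, 0 < wt i)
    (hsum : (∑ i, wt i) = 1)
    (hsys : ∀ i, i ≠ b → i ≠ w → wt b / wt i = ab i ∧ wt i / wt w = aw i)
    (hbw' : wt b / wt w = ab w) :
    ∀ i, wt i = aw i / (∑ j, aw j) ∧ wt i = 1 / (ab i * ∑ j, (ab j)⁻¹) := by
  have hww := (hwt w).ne'
  -- wt i = aw i * wt w for all i
  have key : ∀ i, wt i = aw i * wt w := by
    intro i
    by_cases hib : i = b
    · subst hib
      rw [← habw, ← hbw']
      field_simp
    · by_cases hiw : i = w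
      · subst hiw; rw [haww, one_mul]
      · have := (hsys i hib hiw).2
        rw [← this]; field_simp
  -- aw i = ab w / ab i
  have key2 : ∀ i, aw i = ab w / ab i := by
    intro i
    by_cases hib : i = b
    · subst hib; rw [habb, habw, div_one]
    · by_cases hiw : i = w
      · subst hiw; rw [haww, div_self (hab i).ne']
      · have := hcons i hib hiw
        rw [eq_div_iff (hab i).ne', mul_comm]
        exact this
  have hsumaw : (∑ j, aw j) * wt w = 1 := by
    rw [← hsum, Finset.sum_mul]
    exact Finset.sum_congr rfl fun j _ => (key j).symm
  have hsawpos : 0 < ∑ j, aw j := by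
    have : (0:ℝ) < n := by positivity
    refine Finset.sum_pos (fun j _ => haw j) ⟨b, Finset.mem_univ b⟩
  have hwtw : wt w = (∑ j, aw j)⁻¹ := by
    field_simp at hsumaw ⊢
    linarith
  intro i
  constructor
  · rw [key i, hwtw, div_eq_mul_inv]
  · rw [key i, hwtw, key2 i]
    have hsum2 : (∑ j, (ab j)⁻¹) = (∑ j, aw j) / ab w := by
      rw [Finset.sum_div]
      refine Finset.sum_congr rfl fun j _ => ?_
      rw [key2 j]
      field_simp [(hab j).ne', (hab w).ne']
    rw [hsum2]
    have h1 := (hab i).ne'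
    have h2 := (hab w).ne'
    have h3 := hsawpos.ne'
    field_simp
end

section
/- Let a_bi₀, a_i₀w, a_bj₀, a_j₀w be positive reals with a_bi₀ * a_i₀w < a_bj₀ * a_j₀w, and let ε = (a_bj₀ a_j₀w - a_bi₀ a_i₀w)/(a_bi₀ + a_i₀w + a_bj₀ + a_j₀w). Suppose (ã_bi₀, ã_i₀w, ã_bj₀, ã_j₀w) are positive reals satisfying ã_bi₀ * ã_i₀w = ã_bj₀ * ã_j₀w, with |ã_bi₀ - a_bi₀| ≤ ε, |ã_i₀w - a_i₀w| ≤ ε, |ã_bj₀ - a_bj₀| ≤ ε, |ã_j₀w - a_j₀w| ≤ ε. Then ã_bi₀ = a_bi₀ + ε, ã_i₀w = a_i₀w + ε, ã_bj₀ = a_bj₀ - ε, ã_j₀w = a_j₀w - ε. -/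
set_option maxHeartbeats 800000


theorem stmt_18 (a_bi a_iw a_bj a_jw : ℝ)
    (hbi : 0 < a_bi) (hiw : 0 < a_iw) (hbj : 0 < a_bj) (hjw : 0 < a_jw)
    (h : a_bi * a_iw < a_bj * a_jw)
    (ta_bi ta_iw ta_bj ta_jw : ℝ)
    (htbi : 0 < ta_bi) (htiw : 0 < ta_iw) (htbj : 0 < ta_bj) (htjw : 0 < ta_jw)
    (hcons : ta_bi * ta_iw = ta_bj * ta_jw) :
    let ε := (a_bj * a_jw - a_bi * a_iw) / (a_bi + a_iw + a_bj + a_jw)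
    |ta_bi - a_bi| ≤ ε → |ta_iw - a_iw| ≤ ε → |ta_bj - a_bj| ≤ ε →
      |ta_jw - a_jw| ≤ ε →
    ta_bi = a_bi + ε ∧ ta_iw = a_iw + ε ∧ ta_bj = a_bj - ε ∧ ta_jw = a_jw - ε := by
  intro ε h1 h2 h3 h4
  have hS : 0 < a_bi + a_iw + a_bj + a_jw := by linarith
  have hε : 0 < ε := div_pos (by linarith) hS
  have hεdef : ε * (a_bi + a_iw + a_bj + a_jw) = a_bj * a_jw - a_bi * a_iw := by
    exact div_mul_cancel₀ _ hS.ne'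
  clear_value ε
  -- key product equality
  have hkey : (a_bi + ε) * (a_iw + ε) = (a_bj - ε) * (a_jw - ε) := by
    nlinarith [hεdef]
  rw [abs_le] at h1 h2 h3 h4
  obtain ⟨h1l, h1r⟩ := h1
  obtain ⟨h2l, h2r⟩ := h2
  obtain ⟨h3l, h3r⟩ := h3
  obtain ⟨h4l, h4r⟩ := h4
  have hbjε : 0 ≤ a_bj - ε := by nlinarith [hεdef, mul_pos hbi hiw, mul_pos hbj hiw, mul_pos hbj hbi, mul_pos hbj hbj]
  have hjwε : 0 ≤ a_jw - ε := by nlinarith [hεdef, mul_pos hbi hiw, mul_pos hjw hiw, mul_pos hjw hbi, mul_pos hjw hjw]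
  have hup : ta_bi * ta_iw ≤ (a_bi + ε) * (a_iw + ε) := by nlinarith
  have hlo : (a_bj - ε) * (a_jw - ε) ≤ ta_bj * ta_jw := by nlinarith
  have heq : ta_bi * ta_iw = (a_bi + ε) * (a_iw + ε) := by
    rw [hcons] at hup ⊢
    rw [hkey] at hup ⊢
    linarith
  have heq2 : ta_bj * ta_jw = (a_bj - ε) * (a_jw - ε) := by
    rw [← hcons, heq, hkey]
  have hbjε' : 0 < a_bj - ε := by nlinarith [hεdef, mul_pos hbi hiw, mul_pos hbj hiw, mul_pos hbj hbi, mul_pos hbj hbj]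
  have hA : (a_bi + ε - ta_bi) * (a_iw + ε) = 0 := by
    nlinarith [mul_nonneg (by linarith : (0:ℝ) ≤ a_bi + ε - ta_bi) (by linarith : (0:ℝ) ≤ a_iw + ε), mul_nonneg htbi.le (by linarith : (0:ℝ) ≤ a_iw + ε - ta_iw), heq]
  have hB : ta_bi * (a_iw + ε - ta_iw) = 0 := by
    nlinarith [mul_nonneg (by linarith : (0:ℝ) ≤ a_bi + ε - ta_bi) (by linarith : (0:ℝ) ≤ a_iw + ε), mul_nonneg htbi.le (by linarith : (0:ℝ) ≤ a_iw + ε - ta_iw), heq]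
  have hC : (ta_bj - (a_bj - ε)) * ta_jw = 0 := by
    nlinarith [mul_nonneg (by linarith : (0:ℝ) ≤ ta_bj - (a_bj - ε)) htjw.le, mul_nonneg hbjε (by linarith : (0:ℝ) ≤ ta_jw - (a_jw - ε)), heq2]
  have hD : (a_bj - ε) * (ta_jw - (a_jw - ε)) = 0 := by
    nlinarith [mul_nonneg (by linarith : (0:ℝ) ≤ ta_bj - (a_bj - ε)) htjw.le, mul_nonneg hbjε (by linarith : (0:ℝ) ≤ ta_jw - (a_jw - ε)), heq2]
  have e1 : ta_bi = a_bi + ε := by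
    rcases mul_eq_zero.mp hA with h' | h' <;> linarith
  have e2 : ta_iw = a_iw + ε := by
    rcases mul_eq_zero.mp hB with h' | h' <;> linarith
  have e3 : ta_bj = a_bj - ε := by
    rcases mul_eq_zero.mp hC with h' | h' <;> linarith
  have e4 : ta_jw = a_jw - ε := by
    rcases mul_eq_zero.mp hD with h' | h' <;> linarith
  exact ⟨e1, e2, e3, e4⟩
end

section
/- Let a_bi, a_iw be positive reals and let T > 0 with a_bi * a_iw ≤ T. Set s = (-(a_bi + a_iw) + sqrt((a_bi + a_iw)^2 - 4 a_bi a_iw + 4T))/2. If positive reals b', w' satisfy b' * w' = T, then max(|b' - a_bi|, |w' - a_iw|) ≥ s, with equality if and only if b' = a_bi + s and w' = a_iw + s. -/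
theorem stmt_19 (a_bi a_iw T : ℝ)
    (hbi : 0 < a_bi) (hiw : 0 < a_iw) (hT : 0 < T)
    (h : a_bi * a_iw ≤ T)
    (b' w' : ℝ) (hb' : 0 < b') (hw' : 0 < w')
    (hprod : b' * w' = T) :
    let s := (-(a_bi + a_iw) +
      Real.sqrt ((a_bi + a_iw) ^ 2 - 4 * a_bi * a_iw + 4 * T)) / 2
    s ≤ max |b' - a_bi| |w' - a_iw| ∧
    (max |b' - a_bi| |w' - a_iw| = s ↔ b' = a_bi + s ∧ w' = a_iw + s) := by
  intro s
  have hD0 : 0 ≤ (a_bi + a_iw) ^ 2 - 4 * a_bi * a_iw + 4 * T := by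
    nlinarith [sq_nonneg (a_bi - a_iw)]
  have hsq := Real.sq_sqrt hD0
  have hge : a_bi + a_iw ≤ Real.sqrt ((a_bi + a_iw) ^ 2 - 4 * a_bi * a_iw + 4 * T) := by
    nlinarith [hsq, Real.sqrt_nonneg ((a_bi + a_iw) ^ 2 - 4 * a_bi * a_iw + 4 * T)]
  have hs0 : 0 ≤ s := by simp only [s]; linarith
  have hfac : (a_bi + s) * (a_iw + s) = T := by
    simp only [s]; nlinarith [hsq]
  have hX : 0 < a_bi + s := by linarith
  have hY : 0 < a_iw + s := by linarith
  constructor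
  · by_contra hlt
    push_neg at hlt
    have h1 : |b' - a_bi| < s := lt_of_le_of_lt (le_max_left _ _) hlt
    have h2 : |w' - a_iw| < s := lt_of_le_of_lt (le_max_right _ _) hlt
    have hb1 : b' < a_bi + s := by have := abs_lt.mp h1; linarith [this.2]
    have hw1 : w' < a_iw + s := by have := abs_lt.mp h2; linarith [this.2]
    nlinarith
  · constructor
    · intro hmax
      have h1 : |b' - a_bi| ≤ s := hmax ▸ le_max_left _ _
      have h2 : |w' - a_iw| ≤ s := hmax ▸ le_max_right _ _
      have hb1 : b' ≤ a_bi + s := by have := abs_le.mp h1; linarith [this.2]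
      have hw1 : w' ≤ a_iw + s := by have := abs_le.mp h2; linarith [this.2]
      have hb2 : a_bi + s ≤ b' := by
        nlinarith [mul_nonneg hb'.le (sub_nonneg.2 hw1)]
      have hw2 : a_iw + s ≤ w' := by
        nlinarith [mul_nonneg hw'.le (sub_nonneg.2 hb1)]
      exact ⟨le_antisymm hb1 hb2, le_antisymm hw1 hw2⟩
    · rintro ⟨rfl, rfl⟩
      simp [abs_of_nonneg hs0]
end
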